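/- Let α, β > 0 and (v, θ, ω) ∈ ℝ³ with H₁(v,θ,ω) = 0 and H₂(v,θ,ω) ≠ 0. Then ω ≠ 0 and v ≠ 0, and with t₁ = |ω|/α, t₂ = |v|/β and s₁, s₂ ∈ {−1,1} satisfying s₁·ω = −|ω| and s₂·v = −|v|, the two-phase final state equations hold: ω + s₁αt₁ = 0, v + s₂βt₂ = 0, and θ + ωt₁ + s₁αt₁²/2 + (ω + s₁αt₁)t₂ = 0. -/

import Mathlib

noncomputable def H1 (α v θ ω : ℝ) : ℝ := 2 * α * θ + ω * |ω|

noncomputable def H2 (α β v θ ω : ℝ) : ℝ := ω * |ω| / (2 * α) + θ + ω * |v| / β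

theorem stmt8 (α β v θ ω : ℝ) (hα : 0 < α) (hβ : 0 < β)
    (hH1 : H1 α v θ ω = 0) (hH2 : H2 α β v θ ω ≠ 0)
    (t₁ t₂ : ℝ) (ht₁ : t₁ = |ω| / α) (ht₂ : t₂ = |v| / β)
    (s₁ s₂ : ℝ) (hs₁ : s₁ = -1 ∨ s₁ = 1) (hs₂ : s₂ = -1 ∨ s₂ = 1)
    (hs₁ω : s₁ * ω = -|ω|) (hs₂v : s₂ * v = -|v|) :
    ω ≠ 0 ∧ v ≠ 0 ∧
    ω + s₁ * α * t₁ = 0 ∧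
    v + s₂ * β * t₂ = 0 ∧
    θ + ω * t₁ + s₁ * α * t₁ ^ 2 / 2 + (ω + s₁ * α * t₁) * t₂ = 0 := by
  have hα0 : α ≠ 0 := ne_of_gt hα
  have hβ0 : β ≠ 0 := ne_of_gt hβ
  unfold H1 at hH1
  unfold H2 at hH2
  have hθ : θ = -(ω * |ω|) / (2 * α) := by field_simp; linarith
  have hkey : ω * |v| / β ≠ 0 := by
    intro h; apply hH2; rw [hθ, h]; ring
  have hω : ω ≠ 0 := by intro h; apply hkey; rw [h]; ring
  have hv : v ≠ 0 := by
    intro h; apply hkey; rw [h]; simp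
  have hs1 : s₁ * |ω| = -ω := by
    rcases hs₁ with h | h <;> rw [h] at hs₁ω ⊢ <;> linarith
  have hs2 : s₂ * |v| = -v := by
    rcases hs₂ with h | h <;> rw [h] at hs₂v ⊢ <;> linarith
  have e1 : ω + s₁ * α * t₁ = 0 := by
    rw [ht₁]; field_simp; linear_combination hs1
  have e2 : v + s₂ * β * t₂ = 0 := by
    rw [ht₂]; field_simp; linear_combination hs2
  refine ⟨hω, hv, e1, e2, ?_⟩
  rw [e1, zero_mul, add_zero, hθ, ht₁]
  have hso : s₁ * ω ^ 2 = -(ω * |ω|) := by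
    rw [← sq_abs ω]; linear_combination |ω| * hs1
  field_simp
  linear_combination |ω| * hs1
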